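/- For every integer m ≥ 1, the finite simple continued fraction [11,11,…,11,3] consisting of m elevens followed by a final entry 3 equals F_{5m+4}/F_{5m−1}. -/

import Mathlib

def cf : List ℤ → ℚ
  | [] => 0
  | [a] => (a : ℚ)
  | a :: b :: l => (a : ℚ) + (cf (b :: l))⁻¹

lemma fib_ident (n : ℕ) : Nat.fib (n + 10) = 11 * Nat.fib (n + 5) + Nat.fib n := by
  simp [Nat.fib_add_two]
  ring

lemma cf_aux (k : ℕ) : cf (List.replicate (k + 1) 11 ++ [3]) =
    (Nat.fib (5 * (k + 1) + 4) : ℚ) / (Nat.fib (5 * k + 4) : ℚ) := by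
  induction k with
  | zero =>
      norm_num [cf]
  | succ k ih =>
      have h2 : List.replicate (k + 1 + 1) (11 : ℤ) ++ [3] =
          11 :: (11 :: List.replicate k 11 ++ [3]) := by
        simp [List.replicate_succ]
      rw [h2]
      have h3 : (11 : ℤ) :: List.replicate k 11 ++ [3] =
          List.replicate (k + 1) 11 ++ [3] := by simp [List.replicate_succ]
      have hc : cf (11 :: (11 :: List.replicate k 11 ++ [3])) =
          11 + (cf ((11 : ℤ) :: List.replicate k 11 ++ [3]))⁻¹ := by
        cases h : (11 : ℤ) :: List.replicate k 11 ++ [3] with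
        | nil => simp at h
        | cons b l => rw [← h]; rw [h, cf]; push_cast; ring_nf
      rw [hc, h3, ih]
      have hb : (0 : ℚ) < Nat.fib (5 * (k + 1) + 4) := by
        exact_mod_cast Nat.fib_pos.mpr (by omega)
      have hb' : (0 : ℚ) < Nat.fib (5 * k + 4) := by
        exact_mod_cast Nat.fib_pos.mpr (by omega)
      have hid : Nat.fib (5 * (k + 1 + 1) + 4) =
          11 * Nat.fib (5 * (k + 1) + 4) + Nat.fib (5 * k + 4) := by
        have := fib_ident (5 * k + 4)
        convert this using 2
        all_goals ring_nf
      rw [inv_div]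
      field_simp
      rw [hid]
      push_cast
      ring

theorem cf_elevens_three (m : ℕ) (hm : 1 ≤ m) :
    cf (List.replicate m 11 ++ [3]) =
      (Nat.fib (5 * m + 4) : ℚ) / (Nat.fib (5 * m - 1) : ℚ) := by
  obtain ⟨k, rfl⟩ := Nat.exists_eq_add_of_le hm
  have := cf_aux k
  rw [show 1 + k = k + 1 by ring, show 5 * (k + 1) - 1 = 5 * k + 4 by omega]
  exact this
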